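/- Let n ≥ 4 and let A_n be the split graph with stable set S = {s_1,…,s_n} and central clique K = {v_{ij} : 1≤i<j≤n}, where for all 1≤i<j≤n the neighbors of v_{ij} outside K are exactly s_i and s_j. Then the branch graph B(A_n/K) is the complete graph K_n on the vertex set {s_1,…,s_n}, and consequently A_n belongs to [n,2,1] but not to [n−1,2,1]. -/

import Mathlib

open SimpleGraph

/-- `S` induces a path (a nonempty connected subgraph with maximum degree at most 2,
i.e. a subtree which is a path when `T` is a tree) in the graph `T`. -/
def IsPathSet {W : Type*} (T : SimpleGraph W) (S : Set W) : Prop :=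
  S.Nonempty ∧
  (∀ x ∈ S, ∀ y ∈ S, ∃ p : T.Walk x y, ∀ z ∈ p.support, z ∈ S) ∧
  (∀ x ∈ S, (T.neighborSet x ∩ S).ncard ≤ 2)

/-- A VPT-representation of `G` on host tree `T`: a family of paths of the tree `T`,
one for each vertex of `G`, such that two distinct vertices of `G` are adjacent iff
the corresponding paths share a vertex. -/
structure VPTRep {V W : Type*} (G : SimpleGraph V) (T : SimpleGraph W) where
  tree : T.IsTree
  path : V → Set W
  isPath : ∀ v, IsPathSet T (path v)
  adj_iff : ∀ u v : V, u ≠ v → (G.Adj u v ↔ (path u ∩ path v).Nonempty)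

/-- `G` is a VPT graph: it has a VPT-representation on some finite host tree. -/
def IsVPT {V : Type*} (G : SimpleGraph V) : Prop :=
  ∃ (n : ℕ) (T : SimpleGraph (Fin n)), Nonempty (VPTRep G T)

/-- `G` belongs to the class [h,2,1]: it has a VPT-representation whose host tree has
maximum degree at most `h`. -/
def MemH21 {V : Type*} (G : SimpleGraph V) (h : ℕ) : Prop :=
  ∃ (n : ℕ) (T : SimpleGraph (Fin n)) (_ : VPTRep G T),
    ∀ x : Fin n, (T.neighborSet x).ncard ≤ h

/-- `C` is a clique of `G`: a maximal set of pairwise adjacent vertices. -/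
def IsMaxClique {V : Type*} (G : SimpleGraph V) (C : Set V) : Prop :=
  G.IsClique C ∧ ∀ D, G.IsClique D → C ⊆ D → D = C

/-- The branch graph `B(G/C)`, as a graph on the vertex set of `G`; its relevant
vertices are those of `branchVerts G C`, all others are isolated. -/
def branchGraph {V : Type*} (G : SimpleGraph V) (C : Set V) : SimpleGraph V where
  Adj v w := v ∉ C ∧ w ∉ C ∧ v ≠ w ∧ ¬ G.Adj v w ∧
    (∃ u ∈ C, G.Adj u v ∧ G.Adj u w) ∧
    (∃ v' ∈ C, G.Adj v' v ∧ ¬ G.Adj v' w) ∧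
    (∃ w' ∈ C, G.Adj w' w ∧ ¬ G.Adj w' v)
  symm := by
    constructor
    rintro v w ⟨h1, h2, h3, h4, ⟨u, hu, hu1, hu2⟩, ⟨v', hv', hv1, hv2⟩, ⟨w', hw', hw1, hw2⟩⟩
    exact ⟨h2, h1, h3.symm, fun hadj => h4 hadj.symm, ⟨u, hu, hu2, hu1⟩,
      ⟨w', hw', hw1, hw2⟩, ⟨v', hv', hv1, hv2⟩⟩
  loopless := by constructor; rintro v ⟨_, _, h, _⟩; exact h rfl

/-- The vertex set of the branch graph `B(G/C)`: vertices outside `C` adjacent to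
some vertex of `C`. -/
def branchVerts {V : Type*} (G : SimpleGraph V) (C : Set V) : Set V :=
  {v | v ∉ C ∧ ∃ u ∈ C, G.Adj u v}

/-- `B` is a branch of `T` at `q`: a connected component of `T - q`, i.e. the set of
vertices reachable from some neighbor `y` of `q` by a walk avoiding `q`. -/
def BranchAt {W : Type*} (T : SimpleGraph W) (q : W) (B : Set W) : Prop :=
  ∃ y, T.Adj q y ∧ B = {x | ∃ p : T.Walk y x, q ∉ p.support}

/-- `(S, K)` is a split partition of `G`: `S` is a stable set, `K` is a complete set,
and they partition the vertices. -/
def IsSplitPartition {V : Type*} (G : SimpleGraph V) (S K : Set V) : Prop :=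
  (∀ v, v ∈ S ∨ v ∈ K) ∧ Disjoint S K ∧
  (∀ a ∈ S, ∀ b ∈ S, ¬ G.Adj a b) ∧ G.IsClique K

/-- The split graph `Aₙ`: stable set `{sᵢ} = {Sum.inl i : i}`, central clique
`K = {v_{ij}} = {Sum.inr ⟨(i,j),_⟩ : i < j}`, where the neighbors of `v_{ij}` outside
`K` are exactly `sᵢ` and `sⱼ`. -/
def AGraph (n : ℕ) : SimpleGraph (Fin n ⊕ {p : Fin n × Fin n // p.1 < p.2}) :=
  SimpleGraph.fromRel (fun a b =>
    match a, b with
    | Sum.inr _, Sum.inr _ => True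
    | Sum.inl i, Sum.inr p => p.1.1 = i ∨ p.1.2 = i
    | _, _ => False)


set_option linter.unusedSectionVars false
set_option maxHeartbeats 1000000

section TreeLemmas


variable {W : Type*} [DecidableEq W] {T : SimpleGraph W}

/-- Connectedness of a vertex set via internal walks. -/
def TConn (T : SimpleGraph W) (S : Set W) : Prop :=
  ∀ x ∈ S, ∀ y ∈ S, ∃ p : T.Walk x y, ∀ z ∈ p.support, z ∈ S

lemma tree_path_unique (ht : T.IsTree) {x y : W} {p q : T.Walk x y}
    (hp : p.IsPath) (hq : q.IsPath) : p = q :=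
  (ht.existsUnique_path x y).unique hp hq

lemma tree_path_exists (ht : T.IsTree) (x y : W) : ∃ p : T.Walk x y, p.IsPath :=
  (ht.existsUnique_path x y).exists

lemma tree_path_subset (ht : T.IsTree) {S : Set W} (hS : TConn T S) {x y : W}
    (hx : x ∈ S) (hy : y ∈ S) (p : T.Walk x y) (hp : p.IsPath) :
    ∀ z ∈ p.support, z ∈ S := by
  obtain ⟨w, hw⟩ := hS x hx y hy
  have : p = w.bypass := tree_path_unique ht hp w.bypass_isPath
  intro z hz
  exact hw z (w.support_bypass_subset (this ▸ hz))

lemma tconn_inter (ht : T.IsTree) {A B : Set W} (hA : TConn T A) (hB : TConn T B) :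
    TConn T (A ∩ B) := by
  intro x hx y hy
  obtain ⟨p, hp⟩ := tree_path_exists ht x y
  exact ⟨p, fun z hz => ⟨tree_path_subset ht hA hx.1 hy.1 p hp z hz,
    tree_path_subset ht hB hx.2 hy.2 p hp z hz⟩⟩

/-- Appending two paths that share only their common endpoint yields a path. -/
lemma isPath_append' {u v w : W} {p : T.Walk u v} {q : T.Walk v w}
    (hp : p.IsPath) (hq : q.IsPath)
    (h : ∀ z, z ∈ p.support → z ∈ q.support → z = v) : (p.append q).IsPath := by
  rw [Walk.isPath_def, Walk.support_append]
  refine List.Nodup.append hp.support_nodup ?_ ?_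
  · have := hq.support_nodup
    rw [q.support_eq_cons] at this
    exact this.of_cons
  · intro z hz1 hz2
    have hz2' : z ∈ q.support := by
      rw [q.support_eq_cons]; exact List.mem_cons_of_mem _ hz2
    have hzv : z = v := h z hz1 hz2'
    subst hzv
    have := hq.support_nodup
    rw [q.support_eq_cons] at this
    exact List.Nodup.notMem this hz2

/-- The second vertex of a nontrivial path. -/
lemma path_snd {u v : W} (w : T.Walk u v) (hw : w.IsPath) (hne : u ≠ v) :
    ∃ z, T.Adj u z ∧ z ∈ w.support ∧ z ≠ u := by
  cases w with
  | nil => exact absurd rfl hne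
  | cons h p =>
    refine ⟨_, h, by simp [Walk.support_cons, p.start_mem_support], ?_⟩
    intro hzu
    rw [Walk.cons_isPath_iff] at hw
    exact hw.2 (hzu ▸ p.start_mem_support)

/-- First vertex of a path `r : a → q` lying in a set `X` containing `q`. -/
lemma first_hit {a q : W} (r : T.Walk a q) (hr : r.IsPath) (X : Set W) (hq : q ∈ X) :
    ∃ m, m ∈ X ∧ ∃ r₁ : T.Walk a m, r₁.IsPath ∧ (∀ z ∈ r₁.support, z ∈ r.support) ∧
      (∀ z ∈ r₁.support, z ∈ X → z = m) := by
  induction r with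
  | nil => exact ⟨_, hq, Walk.nil, by simp, by simp, by simp⟩
  | @cons a b q h w ih =>
    by_cases ha : a ∈ X
    · exact ⟨a, ha, Walk.nil, by simp, by simp, by simp⟩
    · rw [Walk.cons_isPath_iff] at hr
      obtain ⟨m, hm, r₁, hr₁, hsub, hfirst⟩ := ih hr.1 hq
      refine ⟨m, hm, Walk.cons h r₁, ?_, ?_, ?_⟩
      · rw [Walk.cons_isPath_iff]
        exact ⟨hr₁, fun hc => hr.2 (hsub a hc)⟩
      · intro z hz
        rw [Walk.support_cons] at hz ⊢
        rcases List.mem_cons.mp hz with hz' | hz'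
        · exact hz' ▸ List.mem_cons_self
        · exact List.mem_cons_of_mem _ (hsub z hz')
      · intro z hz hzX
        rw [Walk.support_cons] at hz
        rcases List.mem_cons.mp hz with hz' | hz'
        · exact absurd (hz' ▸ hzX) ha
        · exact hfirst z hz' hzX

lemma median_exists (ht : T.IsTree) (q a b : W) :
    ∃ (m : W) (p₁ : T.Walk q a) (p₂ : T.Walk q b) (p₃ : T.Walk a b),
      p₁.IsPath ∧ p₂.IsPath ∧ p₃.IsPath ∧
      m ∈ p₁.support ∧ m ∈ p₂.support ∧ m ∈ p₃.support ∧
      (m = q ∨ m = a ∨ m = b ∨ ∃ n₁ n₂ n₃ : W, T.Adj m n₁ ∧ T.Adj m n₂ ∧ T.Adj m n₃ ∧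
        n₁ ≠ n₂ ∧ n₁ ≠ n₃ ∧ n₂ ≠ n₃ ∧
        n₁ ∈ p₁.support ∧ n₂ ∈ p₂.support ∧ n₃ ∈ p₃.support) := by
  obtain ⟨p, hp⟩ := tree_path_exists ht q b
  obtain ⟨r, hr⟩ := tree_path_exists ht a q
  obtain ⟨m, hm, r₁, hr₁, hsub, hfirst⟩ :=
    first_hit r hr {z | z ∈ p.support} p.start_mem_support
  have hm' : m ∈ p.support := hm
  set pt := p.takeUntil m hm' with hptdef
  set pd := p.dropUntil m hm' with hpddef
  have hpt : pt.IsPath := hp.takeUntil hm'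
  have hpd : pd.IsPath := hp.dropUntil hm'
  have hptsub : ∀ z ∈ pt.support, z ∈ p.support := fun z hz => p.support_takeUntil_subset hm' hz
  have hpdsub : ∀ z ∈ pd.support, z ∈ p.support := fun z hz => p.support_dropUntil_subset hm' hz
  have hr₁rev : ∀ z ∈ r₁.reverse.support, z ∈ r₁.support := by
    intro z hz; rwa [Walk.support_reverse, List.mem_reverse] at hz
  have hp₁ : (pt.append r₁.reverse).IsPath := by
    refine isPath_append' hpt hr₁.reverse ?_
    intro z hz1 hz2
    exact hfirst z (hr₁rev z hz2) (hptsub z hz1)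
  have hp₃ : (r₁.append pd).IsPath := by
    refine isPath_append' hr₁ hpd ?_
    intro z hz1 hz2
    exact hfirst z hz1 (hpdsub z hz2)
  refine ⟨m, pt.append r₁.reverse, p, r₁.append pd, hp₁, hp, hp₃, ?_, hm', ?_, ?_⟩
  · exact Walk.subset_support_append_left _ _ pt.end_mem_support
  · exact Walk.subset_support_append_right _ _ pd.start_mem_support
  by_cases hmq : m = q
  · exact Or.inl hmq
  by_cases hma : m = a
  · exact Or.inr (Or.inl hma)
  by_cases hmb : m = b
  · exact Or.inr (Or.inr (Or.inl hmb))
  refine Or.inr (Or.inr (Or.inr ?_))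
  obtain ⟨n₁, hn₁adj, hn₁mem, hn₁ne⟩ := path_snd r₁.reverse hr₁.reverse hma
  obtain ⟨n₂, hn₂adj, hn₂mem, hn₂ne⟩ := path_snd pt.reverse hpt.reverse hmq
  obtain ⟨n₃, hn₃adj, hn₃mem, hn₃ne⟩ := path_snd pd hpd hmb
  have hn₂p : n₂ ∈ p.support := by
    apply hptsub; rwa [Walk.support_reverse, List.mem_reverse] at hn₂mem
  have hn₃p : n₃ ∈ p.support := hpdsub n₃ hn₃mem
  have hn₁r : n₁ ∈ r₁.support := hr₁rev n₁ hn₁mem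
  have hn₁p : n₁ ∉ p.support := fun hc => hn₁ne (hfirst n₁ hn₁r hc)
  have hn₂₃ : n₂ ≠ n₃ := by
    intro he
    have hnd : (pt.support ++ pd.support.tail).Nodup := by
      rw [← Walk.support_append, Walk.take_spec p hm']
      exact hp.support_nodup
    have hdisj := List.disjoint_of_nodup_append hnd
    have hn₃tail : n₃ ∈ pd.support.tail := by
      have := pd.support_eq_cons
      rcases List.mem_cons.mp (this ▸ hn₃mem) with h | h
      · exact absurd h hn₃ne
      · exact h
    have hn₂pt : n₂ ∈ pt.support := by
      rwa [Walk.support_reverse, List.mem_reverse] at hn₂mem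
    exact hdisj hn₂pt (he ▸ hn₃tail)
  refine ⟨n₁, n₂, n₃, hn₁adj, hn₂adj, hn₃adj,
    fun h => hn₁p (h ▸ hn₂p), fun h => hn₁p (h ▸ hn₃p), hn₂₃, ?_, ?_, ?_⟩
  · exact Walk.subset_support_append_right _ _ hn₁mem
  · exact hn₂p
  · exact Walk.subset_support_append_right _ _ hn₃mem

lemma median_cases (ht : T.IsTree) [Finite W] {S : Set W} (hS : IsPathSet T S)
    {q a b : W} (hq : q ∈ S) (ha : a ∈ S) (hb : b ∈ S) :
    (∃ p : T.Walk a b, p.IsPath ∧ q ∈ p.support) ∨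
    (∃ p : T.Walk q b, p.IsPath ∧ a ∈ p.support) ∨
    (∃ p : T.Walk q a, p.IsPath ∧ b ∈ p.support) := by
  obtain ⟨m, p₁, p₂, p₃, hp₁, hp₂, hp₃, hm₁, hm₂, hm₃, hcase⟩ := median_exists ht q a b
  have hconn : TConn T S := hS.2.1
  rcases hcase with rfl | rfl | rfl | ⟨n₁, n₂, n₃, ha₁, ha₂, ha₃, h12, h13, h23, hs₁, hs₂, hs₃⟩
  · exact Or.inl ⟨p₃, hp₃, hm₃⟩
  · exact Or.inr (Or.inl ⟨p₂, hp₂, hm₂⟩)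
  · exact Or.inr (Or.inr ⟨p₁, hp₁, hm₁⟩)
  · exfalso
    have hmS : m ∈ S := tree_path_subset ht hconn hq ha p₁ hp₁ m hm₁
    have hn₁S : n₁ ∈ S := tree_path_subset ht hconn hq ha p₁ hp₁ n₁ hs₁
    have hn₂S : n₂ ∈ S := tree_path_subset ht hconn hq hb p₂ hp₂ n₂ hs₂
    have hn₃S : n₃ ∈ S := tree_path_subset ht hconn ha hb p₃ hp₃ n₃ hs₃
    have hsubset : ({n₁, n₂, n₃} : Set W) ⊆ T.neighborSet m ∩ S := by
      rintro z (rfl | rfl | rfl)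
      · exact ⟨ha₁, hn₁S⟩
      · exact ⟨ha₂, hn₂S⟩
      · exact ⟨ha₃, hn₃S⟩
    have h3 : ({n₁, n₂, n₃} : Set W).ncard = 3 := by
      rw [Set.ncard_insert_of_notMem (by simp [h12, h13]) (Set.toFinite _),
        Set.ncard_insert_of_notMem (by simp [h23]) (Set.toFinite _), Set.ncard_singleton]
    have := Set.ncard_le_ncard hsubset (Set.toFinite _)
    have h2 := hS.2.2 m hmS
    omega

lemma helly3 (ht : T.IsTree) {A B C : Set W} (hA : TConn T A) (hB : TConn T B) (hC : TConn T C)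
    {a b c : W} (hab : a ∈ A ∩ B) (hbc : b ∈ B ∩ C) (hca : c ∈ A ∩ C) :
    (A ∩ B ∩ C).Nonempty := by
  obtain ⟨m, p₁, p₂, p₃, hp₁, hp₂, hp₃, hm₁, hm₂, hm₃, -⟩ := median_exists ht c a b
  refine ⟨m, ⟨?_, ?_⟩, ?_⟩
  · exact tree_path_subset ht hA hca.1 hab.1 p₁ hp₁ m hm₁
  · exact tree_path_subset ht hB hab.2 hbc.1 p₃ hp₃ m hm₃
  · exact tree_path_subset ht hC hca.2 hbc.2 p₂ hp₂ m hm₂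

lemma hellyFinset (ht : T.IsTree) [Nonempty W] {ι : Type*} [DecidableEq ι] (s : Finset ι)
    (F : ι → Set W) (hconn : ∀ i ∈ s, TConn T (F i))
    (hpair : ∀ i ∈ s, ∀ j ∈ s, (F i ∩ F j).Nonempty) :
    ∃ q, ∀ i ∈ s, q ∈ F i := by
  induction s using Finset.induction_on generalizing F with
  | empty => exact ⟨Classical.arbitrary W, by simp⟩
  | @insert a s ha ih =>
    rcases s.eq_empty_or_nonempty with rfl | ⟨i₀, hi₀⟩
    · obtain ⟨x, hx⟩ := hpair a (by simp) a (by simp)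
      exact ⟨x, by simpa using hx.1⟩
    · have hconn' : ∀ i ∈ s, TConn T (F a ∩ F i) := fun i hi =>
        tconn_inter ht (hconn a (s.mem_insert_self a)) (hconn i (Finset.mem_insert_of_mem hi))
      have hpair' : ∀ i ∈ s, ∀ j ∈ s, ((F a ∩ F i) ∩ (F a ∩ F j)).Nonempty := by
        intro i hi j hj
        have h3 := helly3 ht (hconn i (Finset.mem_insert_of_mem hi))
          (hconn a (s.mem_insert_self a)) (hconn j (Finset.mem_insert_of_mem hj))
          (a := ?_) (b := ?_) (c := ?_) ?_ ?_ ?_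
        · obtain ⟨x, hx⟩ := h3
          exact ⟨x, ⟨hx.1.2, hx.1.1⟩, ⟨hx.1.2, hx.2⟩⟩
        · exact (hpair i (Finset.mem_insert_of_mem hi) a (s.mem_insert_self a)).choose
        · exact (hpair a (s.mem_insert_self a) j (Finset.mem_insert_of_mem hj)).choose
        · exact (hpair i (Finset.mem_insert_of_mem hi) j (Finset.mem_insert_of_mem hj)).choose
        · exact (hpair i (Finset.mem_insert_of_mem hi) a (s.mem_insert_self a)).choose_spec
        · exact (hpair a (s.mem_insert_self a) j (Finset.mem_insert_of_mem hj)).choose_spec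
        · exact (hpair i (Finset.mem_insert_of_mem hi) j (Finset.mem_insert_of_mem hj)).choose_spec
      obtain ⟨q, hqall⟩ := ih (fun i => F a ∩ F i) hconn' hpair'
      refine ⟨q, ?_⟩
      intro i hi
      rcases Finset.mem_insert.mp hi with rfl | hi'
      · exact (hqall i₀ hi₀).1
      · exact (hqall i hi').2


end TreeLemmas

lemma agraph_adj_inr_inr {n : ℕ} (σ τ : {p : Fin n × Fin n // p.1 < p.2}) :
    (AGraph n).Adj (Sum.inr σ) (Sum.inr τ) ↔ σ ≠ τ := by
  simp [AGraph, fromRel_adj]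

lemma agraph_adj_inl_inr {n : ℕ} (i : Fin n) (σ : {p : Fin n × Fin n // p.1 < p.2}) :
    (AGraph n).Adj (Sum.inl i) (Sum.inr σ) ↔ (σ.1.1 = i ∨ σ.1.2 = i) := by
  simp [AGraph, fromRel_adj]

lemma agraph_not_adj_inl_inl {n : ℕ} (i j : Fin n) :
    ¬ (AGraph n).Adj (Sum.inl i) (Sum.inl j) := by
  simp [AGraph, fromRel_adj]

/-- The pair `{i,j}` as an element of the clique index type. -/
def mkPair {n : ℕ} (i j : Fin n) (h : i ≠ j) : {p : Fin n × Fin n // p.1 < p.2} :=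
  if hlt : i < j then ⟨(i, j), hlt⟩ else ⟨(j, i), lt_of_le_of_ne (not_lt.mp hlt) (Ne.symm h)⟩

lemma mkPair_fst_or_snd {n : ℕ} (i j : Fin n) (h : i ≠ j) :
    ((mkPair i j h).1.1 = i ∧ (mkPair i j h).1.2 = j) ∨
    ((mkPair i j h).1.1 = j ∧ (mkPair i j h).1.2 = i) := by
  unfold mkPair; split <;> simp

lemma agraph_adj_inl_mkPair {n : ℕ} (k i j : Fin n) (h : i ≠ j) :
    (AGraph n).Adj (Sum.inl k) (Sum.inr (mkPair i j h)) ↔ (i = k ∨ j = k) := by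
  rw [agraph_adj_inl_inr]
  rcases mkPair_fst_or_snd i j h with ⟨h1, h2⟩ | ⟨h1, h2⟩ <;> rw [h1, h2] <;> tauto

lemma exists_third {n : ℕ} (hn : 3 ≤ n) (i j : Fin n) : ∃ k : Fin n, k ≠ i ∧ k ≠ j := by
  have h : ∃ v : ℕ, v < n ∧ v ≠ i.val ∧ v ≠ j.val := by
    refine ⟨if 0 ≠ i.val ∧ 0 ≠ j.val then 0 else if 1 ≠ i.val ∧ 1 ≠ j.val then 1 else 2, ?_⟩
    have hi := i.isLt; have hj := j.isLt
    split_ifs <;> omega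
  obtain ⟨v, hv, hvi, hvj⟩ := h
  exact ⟨⟨v, hv⟩, Fin.ne_of_val_ne hvi, Fin.ne_of_val_ne hvj⟩

/-- The star graph on `n+1` vertices with center `0`. -/
def starG (n : ℕ) : SimpleGraph (Fin (n + 1)) :=
  SimpleGraph.fromRel (fun a _ => a = 0)

lemma starG_adj {n : ℕ} (x y : Fin (n + 1)) :
    (starG n).Adj x y ↔ x ≠ y ∧ (x = 0 ∨ y = 0) := by
  simp [starG, fromRel_adj]

lemma starG_connected (n : ℕ) : (starG n).Connected := by
  rw [connected_iff]
  refine ⟨fun x y => ?_, ⟨0⟩⟩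
  have key : ∀ z : Fin (n + 1), (starG n).Reachable z 0 := by
    intro z
    by_cases hz : z = 0
    · subst hz; exact Reachable.refl _
    · exact Adj.reachable ((starG_adj z 0).mpr ⟨hz, Or.inr rfl⟩)
  exact (key x).trans (key y).symm

lemma starG_acyclic (n : ℕ) : (starG n).IsAcyclic := by
  intro v c hc
  have h3 := hc.three_le_length
  cases c with
  | nil => simp at h3
  | @cons _ x₁ _ h₁ c₁ =>
    cases c₁ with
    | nil => simp [Walk.length_cons] at h3
    | @cons _ x₂ _ h₂ c₂ =>
      rw [starG_adj] at h₁ h₂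
      have hnd : (x₁ :: c₂.support).Nodup := by simpa using hc.support_nodup
      rcases h₁.2 with hv0 | hx₁0
      · -- v = 0, x₁ ≠ 0, then x₂ = 0 = v
        have hx₁ : x₁ ≠ 0 := fun h => h₁.1 (hv0.trans h.symm)
        have hx₂0 : x₂ = 0 := h₂.2.resolve_left hx₁
        have hx₂v : x₂ = v := hx₂0.trans hv0.symm
        cases c₂ with
        | nil =>
          simp [Walk.length_cons] at h3
        | @cons _ x₃ _ h₃ c₃ =>
          have hvc₃ : v ∈ c₃.support := c₃.end_mem_support
          have : x₂ ∉ c₃.support := by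
            have := hnd.of_cons
            rw [Walk.support_cons] at this
            exact List.Nodup.notMem this
          exact this (hx₂v ▸ hvc₃)
      · -- x₁ = 0, v ≠ 0, x₂ ≠ 0
        have hx₂ : x₂ ≠ 0 := fun h => h₂.1 (hx₁0.trans h.symm)
        cases c₂ with
        | nil =>
          simp [Walk.length_cons] at h3
        | @cons _ x₃ _ h₃ c₃ =>
          rw [starG_adj] at h₃
          have hx₃0 : x₃ = 0 := h₃.2.resolve_left hx₂
          have hx₁mem : x₁ ∈ (Walk.cons ‹(starG n).Adj x₂ x₃› c₃).support := by
            show x₁ ∈ x₂ :: c₃.support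
            exact List.mem_cons_of_mem _ (hx₃0.trans hx₁0.symm ▸ c₃.start_mem_support)
          exact List.Nodup.notMem hnd hx₁mem

lemma starG_isTree (n : ℕ) : (starG n).IsTree :=
  ⟨starG_connected n, starG_acyclic n⟩

lemma starWalk {n : ℕ} (x y : Fin (n + 1)) :
    ∃ p : (starG n).Walk x y, ∀ z ∈ p.support, z = x ∨ z = 0 ∨ z = y := by
  by_cases hxy : x = y
  · subst hxy; exact ⟨Walk.nil, by simp⟩
  by_cases hx : x = 0
  · exact ⟨Walk.cons ((starG_adj x y).mpr ⟨hxy, Or.inl hx⟩) Walk.nil, by simp +contextual⟩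
  by_cases hy : y = 0
  · exact ⟨Walk.cons ((starG_adj x y).mpr ⟨hxy, Or.inr hy⟩) Walk.nil, by simp +contextual⟩
  · refine ⟨Walk.cons ((starG_adj x 0).mpr ⟨hx, Or.inr rfl⟩)
      (Walk.cons ((starG_adj 0 y).mpr ⟨fun h => hy h.symm, Or.inl rfl⟩) Walk.nil), ?_⟩
    simp +contextual [or_comm]

lemma star_nb_zero {n : ℕ} : (starG n).neighborSet 0 = {y | y ≠ 0} := by
  ext y; simp [starG_adj, ne_comm]

lemma star_nb_ne {n : ℕ} {x : Fin (n + 1)} (hx : x ≠ 0) :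
    (starG n).neighborSet x = {0} := by
  ext y
  simp only [mem_neighborSet, starG_adj, Set.mem_singleton_iff]
  constructor
  · exact fun h => h.2.resolve_left hx
  · rintro rfl; exact ⟨hx, Or.inr rfl⟩

lemma star_deg {n : ℕ} (hn : 1 ≤ n) (x : Fin (n + 1)) : ((starG n).neighborSet x).ncard ≤ n := by
  by_cases hx : x = 0
  · subst hx
    rw [star_nb_zero]
    have h1 : ({y : Fin (n+1) | y ≠ 0}) = ({0}ᶜ : Set (Fin (n+1))) := by ext; simp
    rw [h1]
    have := Set.ncard_add_ncard_compl ({0} : Set (Fin (n+1))) (Set.toFinite _) (Set.toFinite _)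
    rw [Set.ncard_singleton, Nat.card_eq_fintype_card, Fintype.card_fin] at this
    omega
  · rw [star_nb_ne hx, Set.ncard_singleton]
    omega

noncomputable def starRep (n : ℕ) (hn : 1 ≤ n) : VPTRep (AGraph n) (starG n) where
  tree := starG_isTree n
  path := fun v => match v with
    | Sum.inl i => {i.succ}
    | Sum.inr σ => {0, σ.1.1.succ, σ.1.2.succ}
  isPath := by
    rintro (i | σ)
    · refine ⟨⟨i.succ, rfl⟩, ?_, ?_⟩
      · intro x hx y hy
        simp only [Set.mem_singleton_iff] at hx hy
        subst hx; subst hy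
        exact ⟨Walk.nil, by simp⟩
      · intro x _
        calc ((starG n).neighborSet x ∩ {i.succ}).ncard ≤ ({i.succ} : Set _).ncard :=
              Set.ncard_le_ncard Set.inter_subset_right (Set.toFinite _)
          _ ≤ 2 := by rw [Set.ncard_singleton]; omega
    · refine ⟨⟨0, by simp⟩, ?_, ?_⟩
      · intro x hx y hy
        obtain ⟨p, hp⟩ := starWalk x y
        refine ⟨p, fun z hz => ?_⟩
        rcases hp z hz with rfl | rfl | rfl
        · exact hx
        · simp
        · exact hy
      · intro x hx
        by_cases h0 : x = 0
        · subst h0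
          have hsub : (starG n).neighborSet 0 ∩ {0, σ.1.1.succ, σ.1.2.succ} ⊆
              {σ.1.1.succ, σ.1.2.succ} := by
            rintro z ⟨hz1, hz2⟩
            rw [star_nb_zero] at hz1
            rcases hz2 with rfl | h
            · exact absurd rfl hz1
            · exact h
          calc _ ≤ ({σ.1.1.succ, σ.1.2.succ} : Set _).ncard :=
                Set.ncard_le_ncard hsub (Set.toFinite _)
            _ ≤ 2 := by


                refine le_trans (Set.ncard_insert_le _ _) ?_
                rw [Set.ncard_singleton]
        · have hsub : (starG n).neighborSet x ∩ {0, σ.1.1.succ, σ.1.2.succ} ⊆ {0} := by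
            rw [star_nb_ne h0]
            exact Set.inter_subset_left
          calc _ ≤ ({0} : Set (Fin (n+1))).ncard :=
                Set.ncard_le_ncard hsub (Set.toFinite _)
            _ ≤ 2 := by rw [Set.ncard_singleton]; omega
  adj_iff := by
    have hinter : ∀ (i : Fin n) (σ : {p : Fin n × Fin n // p.1 < p.2}),
        (({i.succ} : Set (Fin (n+1))) ∩ {0, σ.1.1.succ, σ.1.2.succ}).Nonempty ↔
        (σ.1.1 = i ∨ σ.1.2 = i) := by
      intro i σ
      rw [Set.singleton_inter_nonempty]
      simp only [Set.mem_insert_iff, Set.mem_singleton_iff]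
      rw [Fin.succ_inj, Fin.succ_inj]
      have : (i.succ = 0) ↔ False := by simp [Fin.succ_ne_zero]
      rw [this]
      tauto
    rintro (i | σ) (j | τ) hne
    · rw [iff_false_intro (agraph_not_adj_inl_inl i j)]
      simp only [false_iff]
      rintro ⟨z, hz1, hz2⟩
      simp only [Set.mem_singleton_iff] at hz1 hz2
      exact hne (by rw [← Fin.succ_inj.mp (hz1 ▸ hz2 : i.succ = j.succ)])
    · rw [agraph_adj_inl_inr]
      exact (hinter i τ).symm
    · rw [adj_comm, agraph_adj_inl_inr, Set.inter_comm]
      exact (hinter j σ).symm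
    · rw [agraph_adj_inr_inr]
      have hst : σ ≠ τ := fun h => hne (h ▸ rfl)
      exact iff_of_true hst ⟨0, by simp, by simp⟩

lemma memH21_agraph (n : ℕ) (hn : 1 ≤ n) : MemH21 (AGraph n) n :=
  ⟨n + 1, starG n, starRep n hn, fun x => star_deg hn x⟩

lemma part1 (n : ℕ) (hn : 4 ≤ n) :
    branchVerts (AGraph n) (Set.range Sum.inr)
        = Set.range (Sum.inl : Fin n → Fin n ⊕ {p : Fin n × Fin n // p.1 < p.2}) ∧
      (∀ i j : Fin n,
        (branchGraph (AGraph n) (Set.range Sum.inr)).Adj (Sum.inl i) (Sum.inl j) ↔ i ≠ j) := by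
  have hn2 : 2 ≤ n := by omega
  constructor
  · ext v
    constructor
    · rintro ⟨hv, -⟩
      rcases v with i | σ
      · exact ⟨i, rfl⟩
      · exact absurd ⟨σ, rfl⟩ hv
    · rintro ⟨i, rfl⟩
      refine ⟨by rintro ⟨σ, h⟩; exact absurd h (by simp), ?_⟩
      obtain ⟨k, hk, -⟩ := exists_third (by omega) i i
      refine ⟨Sum.inr (mkPair i k (Ne.symm hk)), ⟨_, rfl⟩, ?_⟩
      rw [(AGraph n).adj_comm, agraph_adj_inl_mkPair]
      exact Or.inl rfl
  · intro i j
    constructor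
    · rintro ⟨-, -, hne, -⟩
      exact fun h => hne (h ▸ rfl)
    · intro hij
      obtain ⟨k, hki, hkj⟩ := exists_third (by omega) i j
      refine ⟨by rintro ⟨σ, h⟩; exact absurd h (by simp),
        by rintro ⟨σ, h⟩; exact absurd h (by simp),
        fun h => hij (Sum.inl_injective h),
        agraph_not_adj_inl_inl i j, ?_, ?_, ?_⟩
      · refine ⟨Sum.inr (mkPair i j hij), ⟨_, rfl⟩, ?_, ?_⟩
        · rw [(AGraph n).adj_comm, agraph_adj_inl_mkPair]; exact Or.inl rfl
        · rw [(AGraph n).adj_comm, agraph_adj_inl_mkPair]; exact Or.inr rfl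
      · refine ⟨Sum.inr (mkPair i k (Ne.symm hki)), ⟨_, rfl⟩, ?_, ?_⟩
        · rw [(AGraph n).adj_comm, agraph_adj_inl_mkPair]; exact Or.inl rfl
        · rw [(AGraph n).adj_comm, agraph_adj_inl_mkPair]
          rintro (h | h)
          · exact hij h
          · exact hkj h
      · refine ⟨Sum.inr (mkPair j k (Ne.symm hkj)), ⟨_, rfl⟩, ?_, ?_⟩
        · rw [(AGraph n).adj_comm, agraph_adj_inl_mkPair]; exact Or.inl rfl
        · rw [(AGraph n).adj_comm, agraph_adj_inl_mkPair]
          rintro (h | h)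
          · exact hij h.symm
          · exact hki h

lemma not_memH21 (n : ℕ) (hn : 4 ≤ n) : ¬ MemH21 (AGraph n) (n - 1) := by
  rintro ⟨m, T, rep, hdeg⟩
  have ht := rep.tree
  have : Nonempty (Fin m) := ht.isConnected.nonempty
  set P := rep.path with hP
  have hconn : ∀ v, TConn T (P v) := fun v => (rep.isPath v).2.1
  have hne : ∀ v, (P v).Nonempty := fun v => (rep.isPath v).1
  -- Helly point of the clique paths
  have hpair : ∀ σ ∈ (Finset.univ : Finset {p : Fin n × Fin n // p.1 < p.2}), ∀ τ ∈ Finset.univ,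
      (P (Sum.inr σ) ∩ P (Sum.inr τ)).Nonempty := by
    intro σ _ τ _
    by_cases hst : σ = τ
    · subst hst; rw [Set.inter_self]; exact hne _
    · exact (rep.adj_iff _ _ (fun h => hst (Sum.inr_injective h))).mp
        ((agraph_adj_inr_inr σ τ).mpr hst)
  obtain ⟨q, hq⟩ := hellyFinset ht (Finset.univ : Finset {p : Fin n × Fin n // p.1 < p.2})
    (fun σ => P (Sum.inr σ)) (fun σ _ => hconn _) hpair
  have hq' : ∀ σ : {p : Fin n × Fin n // p.1 < p.2}, q ∈ P (Sum.inr σ) :=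
    fun σ => hq σ (Finset.mem_univ σ)
  -- q is in no stable path
  have hqS : ∀ i : Fin n, q ∉ P (Sum.inl i) := by
    intro i hqi
    obtain ⟨k, hki, -⟩ := exists_third (by omega) i i
    obtain ⟨l, hli, hlk⟩ := exists_third (by omega) i k
    have hnadj : ¬ (AGraph n).Adj (Sum.inl i) (Sum.inr (mkPair k l (Ne.symm hlk))) := by
      rw [agraph_adj_inl_mkPair]
      rintro (h | h)
      · exact hki h
      · exact hli h
    rw [rep.adj_iff _ _ (by simp)] at hnadj
    exact hnadj ⟨q, hqi, hq' _⟩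
  -- stable paths pairwise disjoint
  have hdisj : ∀ i j : Fin n, i ≠ j → ∀ z, z ∈ P (Sum.inl i) → z ∈ P (Sum.inl j) → False := by
    intro i j hij z hzi hzj
    have := agraph_not_adj_inl_inl (n := n) i j
    rw [rep.adj_iff _ _ (fun h => hij (Sum.inl_injective h))] at this
    exact this ⟨z, hzi, hzj⟩
  -- choose branch directions
  have hNB : ∀ i : Fin n, ∃ y, T.Adj q y ∧ ∃ x, x ∈ P (Sum.inl i) ∧
      ∃ w : T.Walk y x, q ∉ w.support := by
    intro i
    obtain ⟨x₀, hx₀⟩ := hne (Sum.inl i)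
    obtain ⟨p, hp⟩ := tree_path_exists ht q x₀
    cases p with
    | nil => exact absurd hx₀ (hqS i)
    | cons h w =>
      rw [Walk.cons_isPath_iff] at hp
      exact ⟨_, h, x₀, hx₀, w, hp.2⟩
  choose y hyadj x hxP w hw using hNB
  -- key branching lemma
  have key : ∀ i j : Fin n, i ≠ j → ∀ b, b ∈ P (Sum.inl j) →
      ∀ p : T.Walk q b, p.IsPath → ∀ c ∈ p.support, c ∈ P (Sum.inl i) → False := by
    intro i j hij b hb p hp c hc hcPi
    obtain ⟨k, hki, hkj⟩ := exists_third (by omega) i j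
    set σ' := mkPair j k (Ne.symm hkj) with hσ'
    have hadjj : (AGraph n).Adj (Sum.inl j) (Sum.inr σ') := by
      rw [agraph_adj_inl_mkPair]; exact Or.inl rfl
    obtain ⟨b', hb'j, hb'σ⟩ := (rep.adj_iff _ _ (by simp)).mp hadjj
    obtain ⟨p', hp'⟩ := tree_path_exists ht q b'
    have hp'sub : ∀ z ∈ p'.support, z ∈ P (Sum.inr σ') :=
      tree_path_subset ht (hconn _) (hq' σ') hb'σ p' hp'
    have hmeet : ∃ c' ∈ p'.support, c' ∈ P (Sum.inl i) := by
      by_contra hno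
      push_neg at hno
      obtain ⟨wb, hwb⟩ := hconn (Sum.inl j) b' hb'j b hb
      have hW2 : (p'.append wb).bypass.IsPath := Walk.bypass_isPath _
      have hpeq : p = (p'.append wb).bypass := tree_path_unique ht hp hW2
      have hcmem : c ∈ (p'.append wb).support := by
        apply Walk.support_bypass_subset
        rw [← hpeq]; exact hc
      rw [Walk.mem_support_append_iff] at hcmem
      rcases hcmem with hcm | hcm
      · exact hno c hcm hcPi
      · exact hdisj i j hij c hcPi (hwb c hcm)
    obtain ⟨c', hc'p, hc'Pi⟩ := hmeet
    have : (AGraph n).Adj (Sum.inl i) (Sum.inr σ') :=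
      (rep.adj_iff _ _ (by simp)).mpr ⟨c', hc'Pi, hp'sub c' hc'p⟩
    rw [agraph_adj_inl_mkPair] at this
    rcases this with h | h
    · exact hij h.symm
    · exact hki h
  -- injectivity of branch directions
  have hinj : Function.Injective y := by
    intro i j hyij
    by_contra hij
    set σij := mkPair i j hij with hσij
    have hadi : (AGraph n).Adj (Sum.inl i) (Sum.inr σij) := by
      rw [agraph_adj_inl_mkPair]; exact Or.inl rfl
    have hadjj : (AGraph n).Adj (Sum.inl j) (Sum.inr σij) := by
      rw [agraph_adj_inl_mkPair]; exact Or.inr rfl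
    obtain ⟨a, haPi, haσ⟩ := (rep.adj_iff _ _ (by simp)).mp hadi
    obtain ⟨b, hbPj, hbσ⟩ := (rep.adj_iff _ _ (by simp)).mp hadjj
    rcases median_cases ht (rep.isPath (Sum.inr σij)) (hq' σij) haσ hbσ with
      ⟨p, hp, hqp⟩ | ⟨p, hp, hap⟩ | ⟨p, hp, hbp⟩
    · -- q on the a-b path: but there is a walk a → b avoiding q
      obtain ⟨wa, hwa⟩ := hconn (Sum.inl i) a haPi (x i) (hxP i)
      obtain ⟨wb, hwb⟩ := hconn (Sum.inl j) (x j) (hxP j) b hbPj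
      set W3 := wa.append ((w i).reverse.append (((w j).copy hyij.symm rfl).append wb)) with hW3
      have hqW3 : q ∉ W3.support := by
        rw [hW3]
        intro hmem
        rw [Walk.mem_support_append_iff] at hmem
        rcases hmem with hmem | hmem
        · exact hqS i (hwa q hmem)
        rw [Walk.mem_support_append_iff] at hmem
        rcases hmem with hmem | hmem
        · rw [Walk.support_reverse, List.mem_reverse] at hmem
          exact hw i hmem
        rw [Walk.mem_support_append_iff] at hmem
        rcases hmem with hmem | hmem
        · rw [Walk.support_copy] at hmem
          exact hw j hmem
        · exact hqS j (hwb q hmem)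
      have hpeq : p = W3.bypass := tree_path_unique ht hp (Walk.bypass_isPath _)
      exact hqW3 (Walk.support_bypass_subset _ (hpeq ▸ hqp))
    · exact key i j hij b hbPj p hp a hap haPi
    · exact key j i (Ne.symm hij) a haPi p hp b hbp hbPj
  -- conclude: q has at least n neighbours
  have hsub : ↑(Finset.univ.image y) ⊆ T.neighborSet q := by
    intro z hz
    simp only [Finset.coe_image, Set.mem_image] at hz
    obtain ⟨i, -, rfl⟩ := hz
    exact hyadj i
  have hcard : (Finset.univ.image y).card = n := by
    rw [Finset.card_image_of_injective _ hinj, Finset.card_univ, Fintype.card_fin]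
  have hle : n ≤ (T.neighborSet q).ncard := by
    rw [← hcard, ← Set.ncard_coe_finset]
    exact Set.ncard_le_ncard hsub (Set.toFinite _)
  have := hdeg q
  omega

/-- For `n ≥ 4`, the branch graph `B(Aₙ/K)` of `Aₙ` for its central
clique `K` is the complete graph `Kₙ` on the vertex set `{s₁, …, sₙ}`, and
consequently `Aₙ ∈ [n,2,1] - [n-1,2,1]`. -/
theorem stmt13 (n : ℕ) (hn : 4 ≤ n) :
    (branchVerts (AGraph n) (Set.range Sum.inr)
        = Set.range (Sum.inl : Fin n → Fin n ⊕ {p : Fin n × Fin n // p.1 < p.2}) ∧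
      (∀ i j : Fin n,
        (branchGraph (AGraph n) (Set.range Sum.inr)).Adj (Sum.inl i) (Sum.inl j) ↔ i ≠ j)) ∧
    (MemH21 (AGraph n) n ∧ ¬ MemH21 (AGraph n) (n - 1)) := by
  exact ⟨part1 n hn, memH21_agraph n (by omega), not_memH21 n hn⟩
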